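/- Let d ≥ 2, let X satisfy Assumption (A) with E[X⁴] ≥ 3, let X = {X_i : i ≥ 1} be i.i.d. copies of X, and let N = {N_i : i ≥ 1} be i.i.d. standard Gaussian random variables. Then for every n ≥ 1 and every admissible kernel f : [n]^d → ℝ, one has E[Q_X(f)⁴] ≥ E[Q_N(f)⁴]. -/

import Mathlib

open MeasureTheory ProbabilityTheory Filter Topology

noncomputable section

/-- A kernel `f : [n]^d → ℝ` is *admissible*: it vanishes on diagonals, is symmetric,
and satisfies the normalization `d! * Σ f² = 1`. -/
def Admissible (d n : ℕ) (f : (Fin d → Fin n) → ℝ) : Prop :=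
  (∀ i : Fin d → Fin n, ¬ Function.Injective i → f i = 0) ∧
  (∀ (σ : Equiv.Perm (Fin d)) (i : Fin d → Fin n), f (i ∘ σ) = f i) ∧
  (Nat.factorial d : ℝ) * ∑ i : Fin d → Fin n, (f i) ^ 2 = 1

/-- The homogeneous sum `Q_X(f) = Σ_{i₁,…,i_d} f(i₁,…,i_d) X_{i₁} ⋯ X_{i_d}`. -/
def QSum {Ω : Type*} (d n : ℕ) (f : (Fin d → Fin n) → ℝ) (X : ℕ → Ω → ℝ) (ω : Ω) : ℝ :=
  ∑ i : Fin d → Fin n, f i * ∏ k : Fin d, X (i k).val ω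

/-- Assumption (A): `X` is centered with unit variance, vanishing third moment,
and finite fourth moment. -/
def AssumptionA {Ω : Type*} [MeasurableSpace Ω] (μ : Measure Ω) (X : Ω → ℝ) : Prop :=
  Measurable X ∧ Integrable (fun ω => X ω ^ 4) μ ∧
    (∫ ω, X ω ∂μ) = 0 ∧ (∫ ω, X ω ^ 2 ∂μ) = 1 ∧ (∫ ω, X ω ^ 3 ∂μ) = 0

/-- `Xs` is a sequence of i.i.d. copies of `X`. -/
def IIDCopies {Ω : Type*} [MeasurableSpace Ω] (μ : Measure Ω) (X : Ω → ℝ)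
    (Xs : ℕ → Ω → ℝ) : Prop :=
  (∀ i, Measurable (Xs i)) ∧ iIndepFun Xs μ ∧
    ∀ i, μ.map (Xs i) = μ.map X

/-- `Ns` is a sequence of i.i.d. standard Gaussian random variables. -/
def IIDStdGaussian {Ω : Type*} [MeasurableSpace Ω] (μ : Measure Ω)
    (Ns : ℕ → Ω → ℝ) : Prop :=
  (∀ i, Measurable (Ns i)) ∧ iIndepFun Ns μ ∧
    ∀ i, μ.map (Ns i) = gaussianReal 0 1

/-- Convergence in distribution of the sequence `Q n` towards the law `ν`. -/
def TendstoInDistribution {Ω : Type*} [MeasurableSpace Ω] (μ : Measure Ω)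
    (Q : ℕ → Ω → ℝ) (ν : Measure ℝ) : Prop :=
  ∀ g : BoundedContinuousFunction ℝ ℝ,
    Tendsto (fun n => ∫ ω, g (Q n ω) ∂μ) atTop (𝓝 (∫ x, g x ∂ν))

/-- The fourth cumulant `χ₄(W) = E[W⁴] - 3 E[W²]²` of a centered random variable. -/
def chi4 {Ω : Type*} [MeasurableSpace Ω] (μ : Measure Ω) (W : Ω → ℝ) : ℝ :=
  (∫ ω, W ω ^ 4 ∂μ) - 3 * (∫ ω, W ω ^ 2 ∂μ) ^ 2

/-- `X` satisfies the Commutative Fourth Moment Theorem of order `d` (via its i.i.d.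
copies `Xs`): for every sequence of admissible kernels, convergence of the fourth moments
of the homogeneous sums to `3` implies a CLT. -/
def CFMT {Ω : Type*} [MeasurableSpace Ω] (d : ℕ) (μ : Measure Ω) (Xs : ℕ → Ω → ℝ) : Prop :=
  ∀ f : (n : ℕ) → (Fin d → Fin n) → ℝ, (∀ n, 1 ≤ n → Admissible d n (f n)) →
    Tendsto (fun n => ∫ ω, (QSum d n (f n) Xs ω) ^ 4 ∂μ) atTop (𝓝 3) →
    TendstoInDistribution μ (fun n => QSum d n (f n) Xs) (gaussianReal 0 1)

/-- `X` is universal at order `d` (via its i.i.d. copies `Xs`, w.r.t. the i.i.d. standard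
Gaussian sequence `Ns`): a CLT for `Q_X(f_n)` implies a CLT for `Q_N(f_n)`. -/
def UnivD {Ω : Type*} [MeasurableSpace Ω] (d : ℕ) (μ : Measure Ω)
    (Xs Ns : ℕ → Ω → ℝ) : Prop :=
  ∀ f : (n : ℕ) → (Fin d → Fin n) → ℝ, (∀ n, 1 ≤ n → Admissible d n (f n)) →
    TendstoInDistribution μ (fun n => QSum d n (f n) Xs) (gaussianReal 0 1) →
    TendstoInDistribution μ (fun n => QSum d n (f n) Ns) (gaussianReal 0 1)

open Real
open scoped ENNReal NNReal

namespace FMTAux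


lemma abs_pow_le_exp (k : ℕ) (x : ℝ) :
    |x| ^ k ≤ (1 + 4 ^ k * (Nat.factorial k : ℝ)) * rexp (4⁻¹ * x ^ 2) := by
  have hu : (0:ℝ) ≤ 4⁻¹ * x ^ 2 := by positivity
  have h1 : |x| ^ k ≤ 1 + (x ^ 2) ^ k := by
    rcases le_total |x| 1 with h | h
    · have hp1 : |x| ^ k ≤ 1 := pow_le_one₀ (abs_nonneg x) h
      nlinarith [pow_nonneg (sq_nonneg x) k]
    · have h2 : |x| ^ k ≤ (|x| ^ 2) ^ k := by
        rw [← pow_mul]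
        exact pow_le_pow_right₀ h (Nat.le_mul_of_pos_left k two_pos)
      rw [sq_abs] at h2
      linarith
  have h3 : (4⁻¹ * x ^ 2) ^ k / (Nat.factorial k : ℝ) ≤ rexp (4⁻¹ * x ^ 2) :=
    Real.pow_div_factorial_le_exp _ hu k
  have hfac : (0:ℝ) < (Nat.factorial k : ℝ) := by
    exact_mod_cast Nat.factorial_pos k
  have h4 : (x ^ 2) ^ k ≤ 4 ^ k * (Nat.factorial k : ℝ) * rexp (4⁻¹ * x ^ 2) := by
    have h5 : (4⁻¹ * x ^ 2) ^ k ≤ (Nat.factorial k : ℝ) * rexp (4⁻¹ * x ^ 2) := by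
      rw [div_le_iff₀ hfac] at h3
      linarith [h3]
    have h6 : (x ^ 2) ^ k = 4 ^ k * (4⁻¹ * x ^ 2) ^ k := by
      rw [← mul_pow]
      congr 1
      ring
    rw [h6]
    have h7 : (0:ℝ) ≤ 4 ^ k := by positivity
    calc 4 ^ k * (4⁻¹ * x ^ 2) ^ k ≤ 4 ^ k * ((Nat.factorial k : ℝ) * rexp (4⁻¹ * x ^ 2)) :=
          mul_le_mul_of_nonneg_left h5 h7
      _ = 4 ^ k * (Nat.factorial k : ℝ) * rexp (4⁻¹ * x ^ 2) := by ring
  have hexp1 : (1:ℝ) ≤ rexp (4⁻¹ * x ^ 2) := Real.one_le_exp hu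
  nlinarith [h1, h4]

lemma pow_gauss_le (k : ℕ) (x : ℝ) :
    ‖x ^ k * rexp (-(2⁻¹ * x ^ 2))‖
      ≤ (1 + 4 ^ k * (Nat.factorial k : ℝ)) * rexp (-(4⁻¹ * x ^ 2)) := by
  rw [norm_mul, norm_pow, Real.norm_eq_abs, Real.norm_eq_abs, Real.abs_exp]
  have h := abs_pow_le_exp k x
  have hC : (0:ℝ) < 1 + 4 ^ k * (Nat.factorial k : ℝ) := by positivity
  calc |x| ^ k * rexp (-(2⁻¹ * x ^ 2))
      ≤ ((1 + 4 ^ k * (Nat.factorial k : ℝ)) * rexp (4⁻¹ * x ^ 2)) * rexp (-(2⁻¹ * x ^ 2)) :=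
        mul_le_mul_of_nonneg_right h (Real.exp_pos _).le
    _ = (1 + 4 ^ k * (Nat.factorial k : ℝ)) * rexp (-(4⁻¹ * x ^ 2)) := by
        rw [mul_assoc, ← Real.exp_add]
        congr 2
        ring

lemma cont_gauss : Continuous (fun x : ℝ => rexp (-(2⁻¹ * x ^ 2))) :=
  Real.continuous_exp.comp ((continuous_const.mul (continuous_pow 2)).neg)

lemma integrable_pow_gauss (k : ℕ) :
    Integrable (fun x : ℝ => x ^ k * rexp (-(2⁻¹ * x ^ 2))) := by
  have hbase : Integrable (fun x : ℝ =>
      (1 + 4 ^ k * (Nat.factorial k : ℝ)) * rexp (-(4⁻¹ * x ^ 2))) := by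
    have := (integrable_exp_neg_mul_sq (show (0:ℝ) < 4⁻¹ by norm_num)).const_mul
      (1 + 4 ^ k * (Nat.factorial k : ℝ))
    simpa [neg_mul] using this
  refine hbase.mono' ?_ (ae_of_all _ fun x => pow_gauss_le k x)
  exact ((continuous_pow k).mul cont_gauss).aestronglyMeasurable

lemma tendsto_sq_atTop : Tendsto (fun x : ℝ => 4⁻¹ * x ^ 2) atTop atTop := by
  have h := tendsto_pow_atTop (two_ne_zero) (α := ℝ)
  exact h.const_mul_atTop (by norm_num)

lemma tendsto_sq_atBot : Tendsto (fun x : ℝ => 4⁻¹ * x ^ 2) atBot atTop := by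
  have h1 : Tendsto (fun x : ℝ => x ^ 2) atBot atTop := by
    have := (tendsto_pow_atTop (two_ne_zero) (α := ℝ)).comp tendsto_neg_atBot_atTop
    simpa [Function.comp_def, neg_sq] using this
  exact h1.const_mul_atTop (by norm_num)

lemma tendsto_gauss_zero {l : Filter ℝ} (hl : Tendsto (fun x : ℝ => 4⁻¹ * x ^ 2) l atTop) (k : ℕ) :
    Tendsto (fun x : ℝ => x ^ k * rexp (-(2⁻¹ * x ^ 2))) l (𝓝 0) := by
  have h2 : Tendsto (fun x : ℝ => rexp (-(4⁻¹ * x ^ 2))) l (𝓝 0) :=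
    Real.tendsto_exp_atBot.comp (tendsto_neg_atTop_atBot.comp hl)
  have h3 := h2.const_mul (1 + 4 ^ k * (Nat.factorial k : ℝ))
  rw [mul_zero] at h3
  exact squeeze_zero_norm (fun x => pow_gauss_le k x) h3

def Ig (k : ℕ) : ℝ := ∫ x : ℝ, x ^ k * rexp (-(2⁻¹ * x ^ 2))

lemma Ig_zero : Ig 0 = √(2 * π) := by
  have h := integral_gaussian (2⁻¹ : ℝ)
  unfold Ig
  simp only [pow_zero, one_mul]
  rw [show (fun x : ℝ => rexp (-(2⁻¹ * x ^ 2))) = fun x : ℝ => rexp (-2⁻¹ * x ^ 2) from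
    funext fun x => by rw [neg_mul]] at *
  rw [h]
  congr 1
  rw [div_eq_mul_inv, inv_inv]
  ring

lemma Ig_odd (k : ℕ) (hk : Odd k) : Ig k = 0 := by
  have h := MeasureTheory.integral_neg_eq_self
    (fun x : ℝ => x ^ k * rexp (-(2⁻¹ * x ^ 2))) (volume : Measure ℝ)
  simp only [hk.neg_pow, neg_sq, neg_mul, integral_neg] at h
  unfold Ig
  linarith [h]

lemma Ig_rec (k : ℕ) : Ig (k + 2) = (k + 1 : ℝ) * Ig k := by
  have hderiv : ∀ x : ℝ, HasDerivAt (fun x : ℝ => x ^ (k+1) * rexp (-(2⁻¹ * x ^ 2)))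
      ((k + 1 : ℕ) * (x ^ k * rexp (-(2⁻¹ * x ^ 2))) - x ^ (k+2) * rexp (-(2⁻¹ * x ^ 2))) x := by
    intro x
    have h1 : HasDerivAt (fun x : ℝ => x ^ (k+1)) ((k+1 : ℕ) * x ^ k) x := by
      simpa using hasDerivAt_pow (k+1) x
    have h2 : HasDerivAt (fun x : ℝ => -(2⁻¹ * x ^ 2)) (-x) x := by
      have h := ((hasDerivAt_pow 2 x).const_mul (2⁻¹ : ℝ)).neg
      refine h.congr_deriv ?_
      norm_num
      ring
    have h3 := h2.exp
    have h4 := h1.mul h3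
    refine h4.congr_deriv ?_
    push_cast
    ring
  have hint : Integrable (fun x : ℝ =>
      (k + 1 : ℕ) * (x ^ k * rexp (-(2⁻¹ * x ^ 2))) - x ^ (k+2) * rexp (-(2⁻¹ * x ^ 2))) :=
    ((integrable_pow_gauss k).const_mul _).sub (integrable_pow_gauss (k+2))
  have htop := tendsto_gauss_zero tendsto_sq_atTop (k+1)
  have hbot := tendsto_gauss_zero tendsto_sq_atBot (k+1)
  have hIoi := integral_Ioi_of_hasDerivAt_of_tendsto' (a := 0)
    (fun x _ => hderiv x) hint.integrableOn htop
  have hIic := integral_Iic_of_hasDerivAt_of_tendsto' (a := 0)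
    (fun x _ => hderiv x) hint.integrableOn hbot
  have hsplit := intervalIntegral.integral_Iic_add_Ioi (b := (0:ℝ))
    hint.integrableOn hint.integrableOn
  have hexp : ∫ x : ℝ, ((k + 1 : ℕ) * (x ^ k * rexp (-(2⁻¹ * x ^ 2)))
      - x ^ (k+2) * rexp (-(2⁻¹ * x ^ 2))) = (k + 1 : ℕ) * Ig k - Ig (k + 2) := by
    rw [integral_sub ((integrable_pow_gauss k).const_mul _) (integrable_pow_gauss (k+2)),
      integral_const_mul]
    rfl
  rw [hIic, hIoi] at hsplit
  rw [hexp] at hsplit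
  push_cast at hsplit ⊢
  linarith [hsplit]

lemma sqrt_two_pi_pos : 0 < √(2 * π) := Real.sqrt_pos.mpr (by positivity)

lemma gauss_density (h : ℝ → ℝ) :
    ∫ x, h x ∂(gaussianReal 0 1)
      = ∫ x, ((√(2 * π))⁻¹ * rexp (-(2⁻¹ * x ^ 2))) * h x := by
  rw [gaussianReal_of_var_ne_zero 0 one_ne_zero]
  rw [show (gaussianPDF 0 1) = fun x => ((gaussianPDFReal 0 1 x).toNNReal : ℝ≥0∞) from rfl]
  rw [integral_withDensity_eq_integral_smul
    ((measurable_gaussianPDFReal 0 1).real_toNNReal) h]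
  refine integral_congr_ae (ae_of_all _ fun x => ?_)
  show (gaussianPDFReal 0 1 x).toNNReal • h x = ((√(2 * π))⁻¹ * rexp (-(2⁻¹ * x ^ 2))) * h x
  rw [NNReal.smul_def, Real.coe_toNNReal _ (gaussianPDFReal_nonneg _ _ _)]
  unfold gaussianPDFReal
  push_cast
  rw [mul_one, mul_one, sub_zero, show -x ^ 2 / 2 = -(2⁻¹ * x ^ 2) from by ring,
    smul_eq_mul]

lemma integrable_pow_gaussianReal (m : ℕ) :
    Integrable (fun x : ℝ => x ^ m) (gaussianReal 0 1) := by
  rw [gaussianReal_of_var_ne_zero 0 one_ne_zero]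
  rw [show (gaussianPDF 0 1) = fun x => ((gaussianPDFReal 0 1 x).toNNReal : ℝ≥0∞) from rfl]
  rw [integrable_withDensity_iff_integrable_smul
    ((measurable_gaussianPDFReal 0 1).real_toNNReal)]
  refine ((integrable_pow_gauss m).const_mul ((√(2 * π))⁻¹)).congr (ae_of_all _ fun x => ?_)
  show (√(2 * π))⁻¹ * (x ^ m * rexp (-(2⁻¹ * x ^ 2))) = (gaussianPDFReal 0 1 x).toNNReal • x ^ m
  rw [NNReal.smul_def, Real.coe_toNNReal _ (gaussianPDFReal_nonneg _ _ _)]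
  unfold gaussianPDFReal
  push_cast
  rw [mul_one, mul_one, sub_zero, show -x ^ 2 / 2 = -(2⁻¹ * x ^ 2) from by ring,
    smul_eq_mul]
  ring

lemma integral_pow_gaussianReal (m : ℕ) :
    ∫ x, x ^ m ∂(gaussianReal 0 1) = (√(2 * π))⁻¹ * Ig m := by
  rw [gauss_density (fun x => x ^ m)]
  rw [show (fun x : ℝ => ((√(2 * π))⁻¹ * rexp (-(2⁻¹ * x ^ 2))) * x ^ m)
      = fun x : ℝ => (√(2 * π))⁻¹ * (x ^ m * rexp (-(2⁻¹ * x ^ 2))) from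
    funext fun x => by ring]
  rw [integral_const_mul]
  rfl

lemma gauss_m1 : ∫ x, x ∂(gaussianReal 0 1) = 0 := by
  have h := integral_pow_gaussianReal 1
  rw [Ig_odd 1 odd_one, mul_zero] at h
  simpa using h

lemma Ig_two : Ig 2 = √(2 * π) := by
  have := Ig_rec 0
  rw [Ig_zero] at this
  simpa using this

lemma gauss_m2 : ∫ x, x ^ 2 ∂(gaussianReal 0 1) = 1 := by
  rw [integral_pow_gaussianReal 2, Ig_two]
  exact inv_mul_cancel₀ (ne_of_gt sqrt_two_pi_pos)

lemma gauss_m3 : ∫ x, x ^ 3 ∂(gaussianReal 0 1) = 0 := by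
  rw [integral_pow_gaussianReal 3, Ig_odd 3 (by decide), mul_zero]

lemma gauss_m4 : ∫ x, x ^ 4 ∂(gaussianReal 0 1) = 3 := by
  have h := Ig_rec 2
  rw [Ig_two] at h
  rw [integral_pow_gaussianReal 4, h]
  rw [show ((2:ℕ) + 1 : ℝ) * √(2 * π) = 3 * √(2 * π) from by norm_num]
  rw [← mul_assoc, mul_comm ((√(2 * π))⁻¹) 3, mul_assoc,
    inv_mul_cancel₀ (ne_of_gt sqrt_two_pi_pos), mul_one]


lemma integrable_pow_of_le_four (ρ : Measure ℝ) [IsProbabilityMeasure ρ]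
    (h4 : Integrable (fun t : ℝ => t ^ 4) ρ) {m : ℕ} (hm : m ≤ 4) :
    Integrable (fun t : ℝ => t ^ m) ρ := by
  refine ((integrable_const (1:ℝ)).add h4).mono'
    (measurable_id.pow_const m).aestronglyMeasurable
    (ae_of_all _ fun t => ?_)
  rw [norm_pow, Real.norm_eq_abs]
  have h1 : (0:ℝ) ≤ t ^ 4 := by positivity
  rcases le_total |t| 1 with h | h
  · have := pow_le_one₀ (abs_nonneg t) h (n := m)
    simp only [Pi.add_apply]
    linarith
  · have h2 : |t| ^ m ≤ |t| ^ 4 := pow_le_pow_right₀ h hm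
    have h3 : |t| ^ 4 = t ^ 4 := by
      rw [← abs_pow, abs_of_nonneg h1]
    simp only [Pi.add_apply]
    linarith

lemma integrable_pi_prod : ∀ (N : ℕ) (ρ : Fin N → Measure ℝ),
    (∀ i, IsProbabilityMeasure (ρ i)) → ∀ (g : Fin N → ℝ → ℝ),
    (∀ i, Integrable (g i) (ρ i)) →
    Integrable (fun y : Fin N → ℝ => ∏ i, g i (y i)) (Measure.pi ρ) := by
  intro N
  induction N with
  | zero =>
      intro ρ hρ g hg
      haveI := hρ
      haveI : IsProbabilityMeasure (Measure.pi ρ) := by infer_instance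
      simp only [Finset.univ_eq_empty, Finset.prod_empty]
      exact integrable_const 1
  | succ N ih =>
      intro ρ hρ g hg
      haveI := hρ
      have hmp := (measurePreserving_piFinSuccAbove ρ 0).symm
      rw [← hmp.integrable_comp_emb (MeasurableEquiv.measurableEmbedding _)]
      have heq : ((fun y : Fin (N+1) → ℝ => ∏ i, g i (y i)) ∘
          (MeasurableEquiv.piFinSuccAbove (fun _ : Fin (N+1) => ℝ) 0).symm)
          = fun z : ℝ × (Fin N → ℝ) => g 0 z.1 * ∏ i : Fin N, g i.succ (z.2 i) := by
        funext z
        simp only [Function.comp_apply, MeasurableEquiv.piFinSuccAbove_symm_apply,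
          Fin.insertNthEquiv, Equiv.coe_fn_mk, Fin.insertNth_zero]
        rw [Fin.prod_univ_succ]
        simp [Fin.cons_zero, Fin.cons_succ]
      rw [heq]
      exact (hg 0).mul_prod (ih (fun i => ρ i.succ) (fun i => hρ _)
        (fun i => g i.succ) (fun i => hg _))

/-- Sums of monomials with exponents bounded by `a`. -/
def MSum (N a : ℕ) (F : (Fin N → ℝ) → ℝ) : Prop :=
  ∃ (ι : Type) (s : Finset ι) (c : ι → ℝ) (e : ι → Fin N → ℕ),
    (∀ m ∈ s, ∀ j, e m j ≤ a) ∧ ∀ y, F y = ∑ m ∈ s, c m * ∏ j, y j ^ e m j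

lemma MSum.mono {N a b : ℕ} {F : (Fin N → ℝ) → ℝ} (h : MSum N a F) (hab : a ≤ b) :
    MSum N b F := by
  obtain ⟨ι, s, c, e, he, hrep⟩ := h
  exact ⟨ι, s, c, e, fun m hm j => (he m hm j).trans hab, hrep⟩

lemma MSum.const (N a : ℕ) (r : ℝ) : MSum N a (fun _ => r) := by
  refine ⟨Unit, Finset.univ, fun _ => r, fun _ _ => 0, fun m _ j => Nat.zero_le a,
    fun y => ?_⟩
  simp

lemma MSum.mul {N a b : ℕ} {F G : (Fin N → ℝ) → ℝ} (hF : MSum N a F) (hG : MSum N b G) :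
    MSum N (a + b) (fun y => F y * G y) := by
  obtain ⟨ι, s, c, e, he, hrep⟩ := hF
  obtain ⟨ι', s', c', e', he', hrep'⟩ := hG
  refine ⟨ι × ι', s ×ˢ s', fun m => c m.1 * c' m.2, fun m => e m.1 + e' m.2,
    fun m hm j => ?_, fun y => ?_⟩
  · obtain ⟨hm1, hm2⟩ := Finset.mem_product.mp hm
    exact Nat.add_le_add (he _ hm1 j) (he' _ hm2 j)
  · dsimp only
    rw [hrep, hrep', Finset.sum_mul_sum, Finset.sum_product]
    refine Finset.sum_congr rfl fun m hm => Finset.sum_congr rfl fun m' hm' => ?_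
    simp only [Pi.add_apply, pow_add, Finset.prod_mul_distrib]
    ring

lemma MSum.pow {N a : ℕ} {F : (Fin N → ℝ) → ℝ} (h : MSum N a F) (m : ℕ) :
    MSum N (a * m) (fun y => F y ^ m) := by
  induction m with
  | zero =>
      have h0 := MSum.const N (a * 0) 1
      simpa using h0
  | succ m ih =>
      have h2 := ih.mul h
      have h3 : (fun y => (fun y => F y ^ m) y * F y) = fun y => F y ^ (m + 1) := by
        funext y
        rw [pow_succ]
      rw [Nat.mul_succ, ← h3]
      exact h2

lemma MSum.integrable {N : ℕ} (ρ : Fin N → Measure ℝ)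
    (hρ : ∀ i, IsProbabilityMeasure (ρ i))
    (h4 : ∀ i, Integrable (fun t : ℝ => t ^ 4) (ρ i))
    {F : (Fin N → ℝ) → ℝ} (h : MSum N 4 F) : Integrable F (Measure.pi ρ) := by
  haveI := hρ
  obtain ⟨ι, s, c, e, he, hrep⟩ := h
  have : Integrable (fun y : Fin N → ℝ => ∑ m ∈ s, c m * ∏ j, y j ^ e m j) (Measure.pi ρ) := by
    refine integrable_finset_sum s fun m hm => ?_
    refine Integrable.const_mul ?_ (c m)
    exact integrable_pi_prod N ρ hρ (fun j t => t ^ e m j)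
      (fun j => integrable_pow_of_le_four (ρ j) (h4 j) (he m hm j))
  exact this.congr (ae_of_all _ fun y => (hrep y).symm)


section Step

variable {d N : ℕ}

/-- Number of occurrences of `j` in the tuple `i`. -/
def cnt (i : Fin d → Fin (N + 1)) (j : Fin (N + 1)) : ℕ :=
  (Finset.univ.filter fun l => i l = j).card

lemma cnt_prod (i : Fin d → Fin (N + 1)) (z : Fin (N + 1) → ℝ) :
    ∏ l, z (i l) = ∏ j, z j ^ cnt i j := by
  rw [Finset.prod_comp (fun j => z j) i]
  refine Finset.prod_subset (Finset.subset_univ _) fun j _ hj => ?_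
  have h0 : cnt i j = 0 := by
    rw [cnt, Finset.card_eq_zero, Finset.filter_eq_empty_iff]
    intro l _
    exact fun he => hj (Finset.mem_image.mpr ⟨l, Finset.mem_univ l, he⟩)
  show z j ^ cnt i j = 1
  rw [h0, pow_zero]

lemma cnt_le_one {i : Fin d → Fin (N + 1)} (hi : Function.Injective i) (j : Fin (N + 1)) :
    cnt i j ≤ 1 := by
  rw [cnt]
  refine Finset.card_le_one.mpr fun a ha b hb => ?_
  exact hi ((Finset.mem_filter.mp ha).2.trans (Finset.mem_filter.mp hb).2.symm)

lemma step_ineq (f : (Fin d → Fin (N + 1)) → ℝ)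
    (hf0 : ∀ i, ¬ Function.Injective i → f i = 0)
    (k : Fin (N + 1)) (ρ ρ' : Fin (N + 1) → Measure ℝ)
    (hp : ∀ j, IsProbabilityMeasure (ρ j)) (hp' : ∀ j, IsProbabilityMeasure (ρ' j))
    (h4 : ∀ j, Integrable (fun t : ℝ => t ^ 4) (ρ j))
    (h4' : ∀ j, Integrable (fun t : ℝ => t ^ 4) (ρ' j))
    (hoff : ∀ j, j ≠ k → ρ j = ρ' j)
    (hm1 : ∫ t, t ∂(ρ k) = 0) (hm1' : ∫ t, t ∂(ρ' k) = 0)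
    (hm2 : ∫ t, t ^ 2 ∂(ρ k) = ∫ t, t ^ 2 ∂(ρ' k))
    (hm3 : ∫ t, t ^ 3 ∂(ρ k) = 0) (hm3' : ∫ t, t ^ 3 ∂(ρ' k) = 0)
    (hm4 : ∫ t, t ^ 4 ∂(ρ' k) ≤ ∫ t, t ^ 4 ∂(ρ k)) :
    ∫ x, (∑ i, f i * ∏ l, x (i l)) ^ 4 ∂(Measure.pi ρ')
      ≤ ∫ x, (∑ i, f i * ∏ l, x (i l)) ^ 4 ∂(Measure.pi ρ) := by
  classical
  haveI := hp
  haveI := hp'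
  set S0 : Finset (Fin d → Fin (N + 1)) :=
    (Finset.univ.filter fun i => f i ≠ 0).filter (fun i => cnt i k = 0) with hS0
  set S1 : Finset (Fin d → Fin (N + 1)) :=
    (Finset.univ.filter fun i => f i ≠ 0).filter (fun i => ¬ cnt i k = 0) with hS1
  set A : (Fin N → ℝ) → ℝ :=
    fun y => ∑ i ∈ S0, f i * ∏ j', y j' ^ cnt i (k.succAbove j') with hA
  set B : (Fin N → ℝ) → ℝ :=
    fun y => ∑ i ∈ S1, f i * ∏ j', y j' ^ cnt i (k.succAbove j') with hB
  have hinj : ∀ i, f i ≠ 0 → Function.Injective i := fun i hi => by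
    by_contra h
    exact hi (hf0 i h)
  have hprod : ∀ (i : Fin d → Fin (N + 1)) (t : ℝ) (y : Fin N → ℝ),
      (∏ l, (Fin.insertNth (α := fun _ => ℝ) k t y) (i l))
        = t ^ cnt i k * ∏ j', y j' ^ cnt i (k.succAbove j') := by
    intro i t y
    rw [cnt_prod i (Fin.insertNth (α := fun _ => ℝ) k t y),
      Fin.prod_univ_succAbove (fun j => (Fin.insertNth (α := fun _ => ℝ) k t y) j ^ cnt i j) k,
      Fin.insertNth_apply_same]
    congr 1
    refine Finset.prod_congr rfl fun j' _ => ?_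
    rw [Fin.insertNth_apply_succAbove]
  have key : ∀ (t : ℝ) (y : Fin N → ℝ),
      (∑ i, f i * ∏ l, (Fin.insertNth (α := fun _ => ℝ) k t y) (i l)) = A y + t * B y := by
    intro t y
    have hvan : ∀ i ∈ Finset.univ,
        i ∉ (Finset.univ.filter fun i => f i ≠ 0) →
        f i * ∏ l, (Fin.insertNth (α := fun _ => ℝ) k t y) (i l) = 0 := by
      intro i _ hi
      have : f i = 0 := by
        by_contra h
        exact hi (Finset.mem_filter.mpr ⟨Finset.mem_univ i, h⟩)
      rw [this, zero_mul]
    rw [← Finset.sum_subset (Finset.filter_subset _ _) hvan]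
    rw [← Finset.sum_filter_add_sum_filter_not
      (Finset.univ.filter fun i => f i ≠ 0) (fun i => cnt i k = 0)]
    congr 1
    · refine Finset.sum_congr rfl fun i hi => ?_
      have h0 : cnt i k = 0 := (Finset.mem_filter.mp hi).2
      rw [hprod i t y, h0, pow_zero, one_mul]
    · rw [Finset.mul_sum]
      refine Finset.sum_congr rfl fun i hi => ?_
      have h0 : ¬ cnt i k = 0 := (Finset.mem_filter.mp hi).2
      have hfi : f i ≠ 0 :=
        (Finset.mem_filter.mp ((Finset.mem_filter.mp hi).1)).2
      have h1 : cnt i k = 1 :=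
        le_antisymm (cnt_le_one (hinj i hfi) k) (Nat.one_le_iff_ne_zero.mpr h0)
      rw [hprod i t y, h1, pow_one]
      ring
  have hMA : MSum N 1 A := by
    refine ⟨_, S0, f, fun i j' => cnt i (k.succAbove j'), fun i hi j' => ?_, fun y => rfl⟩
    have hfi : f i ≠ 0 := (Finset.mem_filter.mp ((Finset.mem_filter.mp hi).1)).2
    exact cnt_le_one (hinj i hfi) _
  have hMB : MSum N 1 B := by
    refine ⟨_, S1, f, fun i j' => cnt i (k.succAbove j'), fun i hi j' => ?_, fun y => rfl⟩
    have hfi : f i ≠ 0 := (Finset.mem_filter.mp ((Finset.mem_filter.mp hi).1)).2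
    exact cnt_le_one (hinj i hfi) _
  set ν : Measure (Fin N → ℝ) := Measure.pi (fun j' => ρ (k.succAbove j')) with hν
  have hνp : ∀ j', IsProbabilityMeasure (ρ (k.succAbove j')) := fun j' => hp _
  have hν4 : ∀ j', Integrable (fun t : ℝ => t ^ 4) (ρ (k.succAbove j')) := fun j' => h4 _
  have hGint : ∀ m, m ≤ 4 → Integrable
      (fun y => (A y ^ m * B y ^ (4 - m)) * (Nat.choose 4 m : ℝ)) ν := by
    intro m hm4'
    refine MSum.integrable _ hνp hν4 ?_
    refine MSum.mono (((hMA.pow m).mul (hMB.pow (4 - m))).mul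
      (MSum.const N 0 ((Nat.choose 4 m : ℝ)))) ?_
    omega
  have formula : ∀ (σ : Fin (N + 1) → Measure ℝ),
      (∀ j, IsProbabilityMeasure (σ j)) →
      (∀ j, Integrable (fun t : ℝ => t ^ 4) (σ j)) →
      (∀ j', σ (k.succAbove j') = ρ (k.succAbove j')) →
      ∫ x, (∑ i, f i * ∏ l, x (i l)) ^ 4 ∂(Measure.pi σ)
        = ∑ m ∈ Finset.range 5,
            (∫ t, t ^ (4 - m) ∂(σ k)) *
              (∫ y, (A y ^ m * B y ^ (4 - m)) * (Nat.choose 4 m : ℝ) ∂ν) := by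
    intro σ hσp hσ4 hσν
    haveI := hσp
    have hmp := (measurePreserving_piFinSuccAbove σ k).symm
    have hνσ : (Measure.pi fun j' => σ (k.succAbove j')) = ν := by
      rw [hν]
      congr 1
      funext j'
      exact hσν j'
    calc ∫ x, (∑ i, f i * ∏ l, x (i l)) ^ 4 ∂(Measure.pi σ)
        = ∫ z, (∑ i, f i * ∏ l,
            ((MeasurableEquiv.piFinSuccAbove (fun _ : Fin (N + 1) => ℝ) k).symm z) (i l)) ^ 4
            ∂((σ k).prod (Measure.pi fun j' => σ (k.succAbove j'))) :=
          (hmp.integral_comp' _).symm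
      _ = ∫ z : ℝ × (Fin N → ℝ), (∑ m ∈ Finset.range 5,
            z.1 ^ (4 - m) * ((A z.2 ^ m * B z.2 ^ (4 - m)) * (Nat.choose 4 m : ℝ)))
            ∂((σ k).prod ν) := by
          rw [hνσ]
          refine integral_congr_ae (ae_of_all _ fun z => ?_)
          dsimp only
          have hz : (MeasurableEquiv.piFinSuccAbove (fun _ : Fin (N + 1) => ℝ) k).symm z
              = Fin.insertNth (α := fun _ => ℝ) k z.1 z.2 := by
            simp [MeasurableEquiv.piFinSuccAbove_symm_apply, Fin.insertNthEquiv]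
          rw [hz, key z.1 z.2, add_pow]
          refine Finset.sum_congr rfl fun m hm => ?_
          rw [mul_pow]
          ring
      _ = ∑ m ∈ Finset.range 5, ∫ z : ℝ × (Fin N → ℝ),
            z.1 ^ (4 - m) * ((A z.2 ^ m * B z.2 ^ (4 - m)) * (Nat.choose 4 m : ℝ))
            ∂((σ k).prod ν) := by
          refine integral_finset_sum _ fun m hm => ?_
          exact (integrable_pow_of_le_four (σ k) (hσ4 k) (by omega)).mul_prod (hGint m (Nat.lt_succ_iff.mp (Finset.mem_range.mp hm)))
      _ = ∑ m ∈ Finset.range 5,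
            (∫ t, t ^ (4 - m) ∂(σ k)) *
              (∫ y, (A y ^ m * B y ^ (4 - m)) * (Nat.choose 4 m : ℝ) ∂ν) := by
          refine Finset.sum_congr rfl fun m hm => ?_
          exact integral_prod_mul (fun t => t ^ (4 - m))
            (fun y => (A y ^ m * B y ^ (4 - m)) * (Nat.choose 4 m : ℝ))
  have hρ'ν : ∀ j', ρ' (k.succAbove j') = ρ (k.succAbove j') :=
    fun j' => (hoff _ (Fin.succAbove_ne k j')).symm
  rw [formula ρ hp h4 (fun _ => rfl), formula ρ' hp' h4' hρ'ν]
  have hB4 : 0 ≤ ∫ y, (A y ^ 0 * B y ^ (4 - 0)) * (Nat.choose 4 0 : ℝ) ∂ν := by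
    refine integral_nonneg fun y => ?_
    norm_num
    positivity
  have hone : (∫ t, t ^ (4 - 4) ∂(ρ k)) = (∫ t, t ^ (4 - 4) ∂(ρ' k)) := by
    norm_num
  have htwo : (∫ t, t ^ (4 - 2) ∂(ρ k)) = (∫ t, t ^ (4 - 2) ∂(ρ' k)) := by
    norm_num [hm2]
  have hthree : (∫ t, t ^ (4 - 1) ∂(ρ k)) = 0 := by norm_num [hm3]
  have hthree' : (∫ t, t ^ (4 - 1) ∂(ρ' k)) = 0 := by norm_num [hm3']
  have hone1 : (∫ t, t ^ (4 - 3) ∂(ρ k)) = 0 := by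
    norm_num [pow_one, hm1]
  have hone1' : (∫ t, t ^ (4 - 3) ∂(ρ' k)) = 0 := by
    norm_num [pow_one, hm1']
  have hfour : (∫ t, t ^ (4 - 0) ∂(ρ' k)) ≤ (∫ t, t ^ (4 - 0) ∂(ρ k)) := by
    norm_num [hm4]
  rw [Finset.sum_range_succ, Finset.sum_range_succ, Finset.sum_range_succ,
    Finset.sum_range_succ, Finset.sum_range_succ, Finset.sum_range_zero,
    Finset.sum_range_succ, Finset.sum_range_succ, Finset.sum_range_succ,
    Finset.sum_range_succ, Finset.sum_range_succ, Finset.sum_range_zero]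
  rw [hthree, hthree', hone1, hone1', hone, htwo]
  simp only [zero_mul, add_zero, zero_add]
  have hmul := mul_le_mul_of_nonneg_right hfour hB4
  linarith [hmul]

end Step


lemma map_pi {Ω : Type*} [MeasurableSpace Ω] (μ : Measure Ω) [IsProbabilityMeasure μ]
    (Y : ℕ → Ω → ℝ) (hm : ∀ i, Measurable (Y i))
    (hind : iIndepFun Y μ) (n : ℕ) :
    μ.map (fun ω (j : Fin n) => Y j ω) = Measure.pi (fun j : Fin n => μ.map (Y j.val)) := by
  classical
  haveI : ∀ j : Fin n, IsProbabilityMeasure (μ.map (Y j.val)) :=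
    fun j => Measure.isProbabilityMeasure_map (hm j.val).aemeasurable
  haveI : ∀ j : Fin n, SigmaFinite (μ.map (Y j.val)) := fun j => inferInstance
  refine (Measure.pi_eq fun s hs => ?_).symm
  have hT : Measurable (fun ω (j : Fin n) => Y j ω) :=
    measurable_pi_lambda _ (fun j => hm j.val)
  rw [Measure.map_apply hT (MeasurableSet.univ_pi hs)]
  set g : ℕ → Set Ω := fun m => if h : m < n then Y m ⁻¹' s ⟨m, h⟩ else Set.univ with hg
  have hpre : (fun ω (j : Fin n) => Y j ω) ⁻¹' (Set.univ.pi s)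
      = ⋂ m ∈ Finset.range n, g m := by
    ext ω
    simp only [Set.mem_preimage, Set.mem_pi, Set.mem_univ, forall_true_left, Set.mem_iInter,
      Finset.mem_range]
    constructor
    · intro h m hmn
      rw [hg]
      dsimp only
      rw [dif_pos hmn]
      exact h ⟨m, hmn⟩
    · intro h j
      have h2 := h j.val j.isLt
      rw [hg] at h2
      dsimp only at h2
      rwa [dif_pos j.isLt] at h2
  have hmeasg : ∀ m ∈ Finset.range n,
      MeasurableSet[(inferInstance : MeasurableSpace ℝ).comap (Y m)] (g m) := by
    intro m hmn
    have hmn' := Finset.mem_range.mp hmn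
    refine ⟨s ⟨m, hmn'⟩, hs _, ?_⟩
    rw [hg]
    dsimp only
    rw [dif_pos hmn']
  rw [hpre, hind.meas_biInter hmeasg,
    ← Fin.prod_univ_eq_prod_range (fun m => μ (g m)) n]
  refine Finset.prod_congr rfl fun j _ => ?_
  rw [hg]
  dsimp only
  rw [dif_pos j.isLt, Measure.map_apply (hm j.val) (hs j)]

end FMTAux

/-- `E[Q_X(f)⁴] ≥ E[Q_N(f)⁴]` when `E[X⁴] ≥ 3`. -/
theorem fourth_moment_ge_gaussian_fourth_moment
    {Ω : Type*} [MeasurableSpace Ω] (μ : Measure Ω) [IsProbabilityMeasure μ]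
    (d : ℕ) (hd : 2 ≤ d)
    (X : Ω → ℝ) (hA : AssumptionA μ X) (h4 : 3 ≤ ∫ ω, X ω ^ 4 ∂μ)
    (Xs : ℕ → Ω → ℝ) (hXs : IIDCopies μ X Xs)
    (Ns : ℕ → Ω → ℝ) (hNs : IIDStdGaussian μ Ns)
    (n : ℕ) (hn : 1 ≤ n) (f : (Fin d → Fin n) → ℝ) (hf : Admissible d n f) :
    ∫ ω, (QSum d n f Ns ω) ^ 4 ∂μ ≤ ∫ ω, (QSum d n f Xs ω) ^ 4 ∂μ := by
  classical
  obtain ⟨hXmeas, hX4i, hXm1, hXm2, hXm3⟩ := hA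
  obtain ⟨hXsm, hXsind, hXsmap⟩ := hXs
  obtain ⟨hNsm, hNsind, hNsmap⟩ := hNs
  obtain ⟨N, rfl⟩ : ∃ N, n = N + 1 := ⟨n - 1, (Nat.succ_pred_eq_of_pos hn).symm⟩
  set pX : Measure ℝ := μ.map X with hpX
  haveI hpXp : IsProbabilityMeasure pX := Measure.isProbabilityMeasure_map hXmeas.aemeasurable
  have hπm : ∀ m : ℕ, ∫ t, t ^ m ∂pX = ∫ ω, X ω ^ m ∂μ := fun m => by
    rw [hpX, integral_map hXmeas.aemeasurable
      ((continuous_pow m).aestronglyMeasurable)]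
  have hπ1 : ∫ t, t ∂pX = 0 := by
    have h := hπm 1
    simpa using h.trans (by simpa using hXm1)
  have hπ4i : Integrable (fun t : ℝ => t ^ 4) pX := by
    rw [hpX, integrable_map_measure ((continuous_pow 4).aestronglyMeasurable)
      hXmeas.aemeasurable]
    simpa [Function.comp_def] using hX4i
  set Q : ((Fin (N + 1)) → ℝ) → ℝ := fun x => ∑ i, f i * ∏ l, x (i l) with hQ
  have hQc : Continuous Q := by
    rw [hQ]
    exact continuous_finset_sum _ fun i _ =>
      (continuous_const.mul (continuous_finset_prod _ fun l _ => continuous_apply _))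
  have hTX : ∫ ω, (QSum d (N+1) f Xs ω) ^ 4 ∂μ
      = ∫ x, Q x ^ 4 ∂(Measure.pi fun _ : Fin (N+1) => pX) := by
    have hmap' : μ.map (fun ω (j : Fin (N+1)) => Xs j ω)
        = Measure.pi fun _ : Fin (N+1) => pX := by
      rw [FMTAux.map_pi μ Xs hXsm hXsind (N+1)]
      congr 1
      funext j
      rw [hXsmap j.val, hpX]
    rw [← hmap', integral_map (measurable_pi_lambda _ fun j => hXsm j.val).aemeasurable
      ((show Continuous (fun x => Q x ^ 4) from hQc.pow 4).aestronglyMeasurable)]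
    rfl
  have hTN : ∫ ω, (QSum d (N+1) f Ns ω) ^ 4 ∂μ
      = ∫ x, Q x ^ 4 ∂(Measure.pi fun _ : Fin (N+1) => gaussianReal 0 1) := by
    have hmap' : μ.map (fun ω (j : Fin (N+1)) => Ns j ω)
        = Measure.pi fun _ : Fin (N+1) => gaussianReal 0 1 := by
      rw [FMTAux.map_pi μ Ns hNsm hNsind (N+1)]
      congr 1
      funext j
      rw [hNsmap j.val]
    rw [← hmap', integral_map (measurable_pi_lambda _ fun j => hNsm j.val).aemeasurable
      ((show Continuous (fun x => Q x ^ 4) from hQc.pow 4).aestronglyMeasurable)]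
    rfl
  rw [hTX, hTN]
  set ρh : ℕ → Fin (N + 1) → Measure ℝ :=
    fun K j => if (j : ℕ) < K then pX else gaussianReal 0 1 with hρh
  have hρhp : ∀ K j, IsProbabilityMeasure (ρh K j) := fun K j => by
    rw [hρh]
    dsimp only
    split_ifs
    · exact hpXp
    · infer_instance
  have hρh4 : ∀ K j, Integrable (fun t : ℝ => t ^ 4) (ρh K j) := fun K j => by
    rw [hρh]
    dsimp only
    split_ifs
    · exact hπ4i
    · exact FMTAux.integrable_pow_gaussianReal 4
  have hchain : ∀ K : ℕ,
      ∫ x, Q x ^ 4 ∂(Measure.pi (ρh 0)) ≤ ∫ x, Q x ^ 4 ∂(Measure.pi (ρh K)) := by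
    intro K
    induction K with
    | zero => exact le_rfl
    | succ K ih =>
        refine ih.trans ?_
        by_cases hK : K < N + 1
        · have hk1 : ρh (K+1) ⟨K, hK⟩ = pX := by
            rw [hρh]
            simp
          have hk0 : ρh K ⟨K, hK⟩ = gaussianReal 0 1 := by
            rw [hρh]
            simp
          refine FMTAux.step_ineq f hf.1 ⟨K, hK⟩ (ρh (K+1)) (ρh K)
            (hρhp _) (hρhp _) (hρh4 _) (hρh4 _) ?_ ?_ ?_ ?_ ?_ ?_ ?_
          · intro j hj
            have hjK : (j : ℕ) ≠ K := fun h => hj (Fin.ext h)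
            rw [hρh]
            dsimp only
            by_cases h2 : (j : ℕ) < K
            · rw [if_pos h2, if_pos (by omega)]
            · rw [if_neg h2, if_neg (by omega)]
          · rw [hk1]
            exact hπ1
          · rw [hk0]
            exact FMTAux.gauss_m1
          · rw [hk1, hk0, hπm 2, hXm2, FMTAux.gauss_m2]
          · rw [hk1, hπm 3]
            exact hXm3
          · rw [hk0]
            exact FMTAux.gauss_m3
          · rw [hk1, hk0, hπm 4, FMTAux.gauss_m4]
            exact h4
        · have heq : ρh (K+1) = ρh K := by
            funext j
            rw [hρh]
            dsimp only
            have hj : (j : ℕ) < K := lt_of_lt_of_le j.isLt (not_lt.mp hK)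
            rw [if_pos hj, if_pos (by omega)]
          rw [heq]
  have hend0 : ρh 0 = fun _ : Fin (N+1) => gaussianReal 0 1 := by
    funext j
    rw [hρh]
    simp
  have hendn : ρh (N+1) = fun _ : Fin (N+1) => pX := by
    funext j
    rw [hρh]
    simp [j.isLt]
  have hres := hchain (N+1)
  rw [hend0, hendn] at hres
  exact hres
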